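/- Let 𝒪 be an algebra of observables on a nonempty set Ω, P an observable probability, and X ∈ 𝒪 integrable with X(ω) ≥ α for all ω ∈ Ω. Then ∫ X dP = α + ∫_α^∞ P(X⁻¹((t, ∞))) dt = α + ∫_α^∞ P(X⁻¹([t, ∞))) dt, where the integrals over (α, ∞) are Lebesgue integrals (the sets X⁻¹((t,∞)) are co-zero sets and the sets X⁻¹([t,∞)) are zero sets, so P is defined on them). -/

import Mathlib

open Filter MeasureTheory Topology

variable {Ω : Type*}

/-- A family `𝒪` of real functions on `Ω` is an algebra of observables: for every `n ≥ 1`,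
all `X₁, …, Xₙ ∈ 𝒪` and every `φ` continuous on the image of `(X₁, …, Xₙ)`,
the composite `ω ↦ φ (X₁ ω, …, Xₙ ω)` belongs to `𝒪`. -/
def IsObsAlg (o : Set (Ω → ℝ)) : Prop :=
  ∀ n : ℕ, 0 < n → ∀ X : Fin n → Ω → ℝ, (∀ i, X i ∈ o) →
    ∀ φ : (Fin n → ℝ) → ℝ,
      ContinuousOn φ (Set.range fun ω => fun i => X i ω) →
      (fun ω => φ fun i => X i ω) ∈ o

/-- `F ⊆ Ω` is a zero set if `F = X⁻¹({0})` for some `X ∈ 𝒪`. -/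
def IsZeroSet (o : Set (Ω → ℝ)) (F : Set Ω) : Prop :=
  ∃ X ∈ o, F = X ⁻¹' {0}

/-- A co-zero set is the complement of a zero set. -/
def IsCozeroSet (o : Set (Ω → ℝ)) (U : Set Ω) : Prop :=
  IsZeroSet o Uᶜ

/-- The observable sets are the zero sets together with the co-zero sets. -/
def IsObsSet (o : Set (Ω → ℝ)) (A : Set Ω) : Prop :=
  IsZeroSet o A ∨ IsCozeroSet o A

/-- An observable probability: additive on disjoint observable sets with observable union,
nonnegative on observable sets, normalized, with monotone convergence along increasing
sequences of co-zero sets whose union is a co-zero set. -/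
def IsObsProb (o : Set (Ω → ℝ)) (P : Set Ω → ℝ) : Prop :=
  (∀ A B : Set Ω, IsObsSet o A → IsObsSet o B → Disjoint A B →
    IsObsSet o (A ∪ B) → P (A ∪ B) = P A + P B) ∧
  (∀ A : Set Ω, IsObsSet o A → 0 ≤ P A) ∧
  (P Set.univ = 1) ∧
  (∀ (U : ℕ → Set Ω) (V : Set Ω), (∀ i, IsCozeroSet o (U i)) → Monotone U →
    IsCozeroSet o V → (⋃ i, U i) = V →
    Tendsto (fun i => P (U i)) atTop (𝓝 (P V)))

/-- `μ` is the distribution of `X` under `P`: a Borel probability measure on `ℝ` with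
`μ U = P (X ⁻¹' U)` for every open `U ⊆ ℝ`. -/
def IsDistribution (o : Set (Ω → ℝ)) (P : Set Ω → ℝ) (X : Ω → ℝ)
    (μ : Measure ℝ) : Prop :=
  IsProbabilityMeasure μ ∧
  ∀ U : Set ℝ, IsOpen U → μ U = ENNReal.ofReal (P (X ⁻¹' U))

/-- Membership in `𝒪^∞`: a bounded member of `𝒪`. -/
def MemBdd (o : Set (Ω → ℝ)) (X : Ω → ℝ) : Prop :=
  X ∈ o ∧ ∃ M : ℝ, ∀ ω, |X ω| ≤ M

/-- The closed algebra `𝒜_X` generated by `X`: all `φ ∘ X` with `φ : ℝ → ℝ` continuous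
(equivalent, by Tietze extension, to continuous functions on the closure of the image). -/
def ClosedAlg (X : Ω → ℝ) : Set (Ω → ℝ) :=
  {Y | ∃ φ : ℝ → ℝ, Continuous φ ∧ Y = φ ∘ X}

/-- Positivity of a functional on `𝒪^∞`. -/
def PositiveFunc (o : Set (Ω → ℝ)) (E : (Ω → ℝ) → ℝ) : Prop :=
  ∀ X, MemBdd o X → (∀ ω, 0 ≤ X ω) → 0 ≤ E X

/-- Quasi-linearity: `E` is linear on each `𝒜_X`, `X ∈ 𝒪^∞`. -/
def QuasiLinear (o : Set (Ω → ℝ)) (E : (Ω → ℝ) → ℝ) : Prop :=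
  ∀ X, MemBdd o X → ∀ Y ∈ ClosedAlg X, ∀ Z ∈ ClosedAlg X, ∀ a b : ℝ,
    E (fun ω => a * Y ω + b * Z ω) = a * E Y + b * E Z

/-- `X ⪯ U` : there is a zero set `F` with `X ≤ 1_F` pointwise and `F ⊆ U`. -/
def PrecU (o : Set (Ω → ℝ)) (X : Ω → ℝ) (U : Set Ω) : Prop :=
  ∃ F : Set Ω, IsZeroSet o F ∧ (∀ ω, X ω ≤ F.indicator (fun _ => (1:ℝ)) ω) ∧ F ⊆ U

/-- An observable expectation: quasi-linear, positive, normalized, with monotone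
convergence along increasing sequences in `𝒪^∞` converging pointwise in `𝒪^∞`. -/
def IsObsExp (o : Set (Ω → ℝ)) (E : (Ω → ℝ) → ℝ) : Prop :=
  QuasiLinear o E ∧ PositiveFunc o E ∧ E (fun _ => 1) = 1 ∧
  (∀ (X : ℕ → Ω → ℝ) (Y : Ω → ℝ), (∀ n, MemBdd o (X n)) → MemBdd o Y →
    (∀ n ω, X n ω ≤ X (n+1) ω) →
    (∀ ω, Tendsto (fun n => X n ω) atTop (𝓝 (Y ω))) →
    Tendsto (fun n => E (X n)) atTop (𝓝 (E Y)))

/-- A quasi-additive probability: axioms (I)-(III) of an observable probability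
together with inner regularity (IV'): `P U = sup {P F : F zero set, F ⊆ U}`. -/
def IsQuasiAddProb (o : Set (Ω → ℝ)) (P : Set Ω → ℝ) : Prop :=
  (∀ A B : Set Ω, IsObsSet o A → IsObsSet o B → Disjoint A B →
    IsObsSet o (A ∪ B) → P (A ∪ B) = P A + P B) ∧
  (∀ A : Set Ω, IsObsSet o A → 0 ≤ P A) ∧
  (P Set.univ = 1) ∧
  (∀ U : Set Ω, IsCozeroSet o U →
    P U = sSup {r | ∃ F : Set Ω, IsZeroSet o F ∧ F ⊆ U ∧ r = P F})

/-- for an integrable observable `X ≥ α`,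
`∫ X dP = α + ∫_α^∞ P(X > t) dt = α + ∫_α^∞ P(X ≥ t) dt`. -/
theorem integral_eq_layer_cake {Ω : Type*} [Nonempty Ω]
    (o : Set (Ω → ℝ)) (hO : IsObsAlg o) (P : Set Ω → ℝ) (hP : IsObsProb o P)
    (X : Ω → ℝ) (hX : X ∈ o) (α : ℝ) (hα : ∀ ω, α ≤ X ω)
    (μ : Measure ℝ) (hμ : IsDistribution o P X μ) (hint : Integrable id μ) :
    (∫ t, t ∂μ) = α + ∫ t in Set.Ioi α, P (X ⁻¹' Set.Ioi t) ∧
    (∫ t, t ∂μ) = α + ∫ t in Set.Ioi α, P (X ⁻¹' Set.Ici t) := by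
  obtain ⟨hprob, hopen⟩ := hμ
  haveI := hprob
  obtain ⟨hadd, hpos, hnorm, -⟩ := hP
  -- closure under composition with a single continuous function
  have hcomp : ∀ φ : ℝ → ℝ, Continuous φ → (fun ω => φ (X ω)) ∈ o := by
    intro φ hφ
    have := hO 1 one_pos (fun _ => X) (fun _ => hX) (fun v => φ (v 0))
      ((hφ.comp (continuous_apply 0)).continuousOn)
    simpa using this
  have hzero_empty : IsZeroSet o (∅ : Set Ω) :=
    ⟨fun _ => 1, by simpa using hcomp (fun _ => 1) continuous_const, by ext ω; simp⟩
  have hzero_univ : IsZeroSet o (Set.univ : Set Ω) :=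
    ⟨fun _ => 0, by simpa using hcomp (fun _ => 0) continuous_const, by ext ω; simp⟩
  have hPempty : P ∅ = 0 := by
    have h := hadd ∅ ∅ (Or.inl hzero_empty) (Or.inl hzero_empty) (by simp)
      (by rw [Set.union_self]; exact Or.inl hzero_empty)
    simp only [Set.union_self] at h
    linarith
  -- zero / cozero structure of level sets
  have hIciZ : ∀ t : ℝ, IsZeroSet o (X ⁻¹' Set.Ici t) := by
    intro t
    refine ⟨fun ω => max (t - X ω) 0, hcomp (fun x => max (t - x) 0)
      ((continuous_const.sub continuous_id).max continuous_const), ?_⟩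
    ext ω
    simp [max_eq_right_iff, sub_nonpos]
  have hIicZ : ∀ t : ℝ, IsZeroSet o (X ⁻¹' Set.Iic t) := by
    intro t
    refine ⟨fun ω => max (X ω - t) 0, hcomp (fun x => max (x - t) 0)
      ((continuous_id.sub continuous_const).max continuous_const), ?_⟩
    ext ω
    simp [max_eq_right_iff, sub_nonpos]
  have hIoiC : ∀ t : ℝ, IsCozeroSet o (X ⁻¹' Set.Ioi t) := by
    intro t
    have : (X ⁻¹' Set.Ioi t)ᶜ = X ⁻¹' Set.Iic t := by
      ext ω; simp [not_lt]
    rw [IsCozeroSet, this]; exact hIicZ t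
  have hIioC : ∀ t : ℝ, IsCozeroSet o (X ⁻¹' Set.Iio t) := by
    intro t
    have : (X ⁻¹' Set.Iio t)ᶜ = X ⁻¹' Set.Ici t := by
      ext ω; simp [not_lt]
    rw [IsCozeroSet, this]; exact hIciZ t
  -- identification of P with μ on the relevant sets
  have hPIoi : ∀ t : ℝ, P (X ⁻¹' Set.Ioi t) = (μ (Set.Ioi t)).toReal := by
    intro t
    rw [hopen _ isOpen_Ioi, ENNReal.toReal_ofReal (hpos _ (Or.inr (hIoiC t)))]
  have hPIio : ∀ t : ℝ, P (X ⁻¹' Set.Iio t) = (μ (Set.Iio t)).toReal := by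
    intro t
    rw [hopen _ isOpen_Iio, ENNReal.toReal_ofReal (hpos _ (Or.inr (hIioC t)))]
  have hPIci : ∀ t : ℝ, P (X ⁻¹' Set.Ici t) = (μ (Set.Ici t)).toReal := by
    intro t
    have hunion : X ⁻¹' Set.Ici t ∪ X ⁻¹' Set.Iio t = Set.univ := by
      ext ω; simp [le_or_gt]
    have hdisj : Disjoint (X ⁻¹' Set.Ici t) (X ⁻¹' Set.Iio t) := by
      rw [Set.disjoint_left]
      intro ω h1 h2
      have h1' : t ≤ X ω := h1
      have h2' : X ω < t := h2
      exact absurd h1' (not_le.2 h2')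
    have h := hadd _ _ (Or.inl (hIciZ t)) (Or.inr (hIioC t)) hdisj
      (by rw [hunion]; exact Or.inl hzero_univ)
    rw [hunion, hnorm, hPIio] at h
    have hmeas : μ (Set.Ici t) = 1 - μ (Set.Iio t) := by
      rw [← measure_univ (μ := μ), ← Set.compl_Iio,
        measure_compl measurableSet_Iio (measure_ne_top μ _)]
    have hle : μ (Set.Iio t) ≤ 1 := prob_le_one
    rw [hmeas, ENNReal.toReal_sub_of_le hle ENNReal.one_ne_top, ENNReal.toReal_one]
    linarith
  -- the shifted nonnegative function
  set f : ℝ → ℝ := fun x => x - α with hf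
  have hIio0 : μ (Set.Iio α) = 0 := by
    have : X ⁻¹' Set.Iio α = ∅ := by
      ext ω; simp [not_lt.2 (hα ω)]
    rw [hopen _ isOpen_Iio, this, hPempty, ENNReal.ofReal_zero]
  have f_nn : 0 ≤ᵐ[μ] f := by
    have hae : ∀ᵐ x ∂μ, x ∉ Set.Iio α := by
      rw [ae_iff]; simp only [not_not]; exact hIio0
    filter_upwards [hae] with x hx
    simp only [Set.mem_Iio, not_lt] at hx
    simpa [hf, sub_nonneg] using hx
  have f_int : Integrable f μ := hint.sub (integrable_const α)
  have hsplit : ∫ x, f x ∂μ = (∫ t, t ∂μ) - α := by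
    have h := integral_sub hint (integrable_const (α:ℝ) (μ := μ))
    simpa [integral_const, measure_univ, id] using h
  -- substitution lemma
  have hsub : ∀ g : ℝ → ℝ, ∫ x in Set.Ioi (0:ℝ), g (x + α) = ∫ x in Set.Ioi α, g x := by
    intro g
    have h := (measurePreserving_add_right volume α).setIntegral_preimage_emb
      (measurableEmbedding_addRight α) g (Set.Ioi α)
    simpa using h
  constructor
  · have key := f_int.integral_eq_integral_meas_lt f_nn
    have hset : ∀ t : ℝ, {a : ℝ | t < f a} = Set.Ioi (t + α) := by
      intro t; ext a; simp [hf, lt_sub_iff_add_lt, Set.mem_Ioi]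
    simp_rw [hset, Measure.real] at key
    rw [hsub (fun t => (μ (Set.Ioi t)).toReal)] at key
    simp_rw [hPIoi]
    rw [← key, hsplit]; ring
  · have key := f_int.integral_eq_integral_meas_le f_nn
    have hset : ∀ t : ℝ, {a : ℝ | t ≤ f a} = Set.Ici (t + α) := by
      intro t; ext a; simp [hf, le_sub_iff_add_le, Set.mem_Ici]
    simp_rw [hset, Measure.real] at key
    rw [hsub (fun t => (μ (Set.Ici t)).toReal)] at key
    simp_rw [hPIci]
    rw [← key, hsplit]; ring
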